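/- Consider a reaction network on 2 species with 3 reactions, with source matrix A ∈ ℤ^{2×3} (nonnegative entries) and stoichiometric matrix Γ ∈ ℤ^{2×3} (with A + Γ entrywise nonnegative), such that the network is quadratic (every column of A has entry sum at most 2) and the multiset of columns of A is, up to exchanging the two species, one of the following six configurations: {(0,0)ᵀ, (1,0)ᵀ, (0,1)ᵀ}, {(0,0)ᵀ, (1,0)ᵀ, (1,1)ᵀ}, {(0,0)ᵀ, (2,0)ᵀ, (0,1)ᵀ}, {(1,0)ᵀ, (2,0)ᵀ, (0,1)ᵀ}, {(0,0)ᵀ, (2,0)ᵀ, (0,2)ᵀ}, {(1,0)ᵀ, (2,0)ᵀ, (0,2)ᵀ}. Then for every vector of positive rate constants κ ∈ ℝ^3_{>0} and for arbitrary target complexes (i.e., with no restriction on Γ beyond A + Γ being entrywise nonnegative), the associated mass-action system has no periodic orbit in ℝ^2_{≥0}. -/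

import Mathlib

open scoped BigOperators

/-- The mass-action vector field of a reaction network with source matrix `A`,
stoichiometric matrix `Γ` and rate constants `κ`. -/
noncomputable def massAction {n m : ℕ} (A Γ : Matrix (Fin n) (Fin m) ℤ)
    (κ : Fin m → ℝ) (x : Fin n → ℝ) : Fin n → ℝ :=
  fun i => ∑ j, (Γ i j : ℝ) * κ j * ∏ k, x k ^ (A k j).toNat

/-- `O` is a periodic orbit of `ẋ = f x` in the nonnegative orthant. -/
def IsPeriodicOrbit {n : ℕ} (f : (Fin n → ℝ) → (Fin n → ℝ)) (O : Set (Fin n → ℝ)) : Prop :=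
  ∃ (x : ℝ → (Fin n → ℝ)) (T : ℝ), 0 < T ∧
    (∀ t i, 0 ≤ x t i) ∧
    (∀ t, HasDerivAt x (f (x t)) t) ∧
    (∀ t, x (t + T) = x t) ∧
    (∃ t s, x t ≠ x s) ∧
    O = Set.range x

section Helpers
open Set Filter Topology

namespace NPO


lemma per_int {x : ℝ → ℝ} {T : ℝ} (hp : ∀ t, x (t + T) = x t) (k : ℤ) (t : ℝ) :
    x (t + k * T) = x t := by
  have hper : Function.Periodic x T := hp
  exact (hper.int_mul k) t

lemma exists_max {x : ℝ → ℝ} {T : ℝ} (hT : 0 < T) (hc : Continuous x)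
    (hp : ∀ t, x (t + T) = x t) : ∃ t0, ∀ s, x s ≤ x t0 := by
  have hper : Function.Periodic x T := hp
  obtain ⟨t0, _, ht0⟩ := isCompact_Icc.exists_isMaxOn (nonempty_Icc.2 hT.le)
    hc.continuousOn
  refine ⟨t0, fun s => ?_⟩
  have h1 : x s = x (s - ⌊s / T⌋ * T) := (hper.sub_int_mul_eq ⌊s / T⌋).symm
  have h2 : s - ⌊s / T⌋ * T ∈ Icc (0:ℝ) T := by
    constructor
    · have := Int.sub_floor_div_mul_nonneg s hT
      linarith
    · have := Int.sub_floor_div_mul_lt s hT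
      linarith
  rw [h1]
  exact ht0 h2

lemma exists_min {x : ℝ → ℝ} {T : ℝ} (hT : 0 < T) (hc : Continuous x)
    (hp : ∀ t, x (t + T) = x t) : ∃ t0, ∀ s, x t0 ≤ x s := by
  obtain ⟨t0, ht0⟩ := exists_max (x := fun t => -x t) hT hc.neg (fun t => by simp [hp t])
  exact ⟨t0, fun s => by have := ht0 s; simpa using this⟩

lemma deriv_zero_at_max {x v : ℝ → ℝ} {t0 : ℝ} (hd : HasDerivAt x (v t0) t0)
    (hmax : ∀ s, x s ≤ x t0) : v t0 = 0 :=
  (IsLocalMax.hasDerivAt_eq_zero (Filter.Eventually.of_forall fun s => hmax s) hd)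

lemma deriv_zero_at_min {x v : ℝ → ℝ} {t0 : ℝ} (hd : HasDerivAt x (v t0) t0)
    (hmin : ∀ s, x t0 ≤ x s) : v t0 = 0 :=
  (IsLocalMin.hasDerivAt_eq_zero (Filter.Eventually.of_forall fun s => hmin s) hd)

/-- a periodic function whose derivative is eventually (from `t1` on) nonnegative is constant -/
lemma const_of_deriv_nonneg_Ici {x v : ℝ → ℝ} {T t1 : ℝ} (hT : 0 < T)
    (hd : ∀ t, HasDerivAt x (v t) t) (hv : ∀ t, t1 ≤ t → 0 ≤ v t)
    (hp : ∀ t, x (t + T) = x t) : ∀ t s, x t = x s := by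
  have hcont : Continuous x := by
    rw [continuous_iff_continuousAt]; exact fun t => (hd t).continuousAt
  have mono : MonotoneOn x (Ici t1) := by
    apply monotoneOn_of_deriv_nonneg (convex_Ici t1) hcont.continuousOn
    · intro t _; exact (hd t).differentiableAt.differentiableWithinAt
    · intro t ht
      rw [(hd t).deriv]
      exact hv t (le_of_lt (by simpa using ht))
  have key : ∀ t, t1 ≤ t → x t = x t1 := by
    intro t ht
    obtain ⟨n, hn⟩ := exists_nat_ge ((t - t1) / T)
    have hn' : t ≤ t1 + n * T := by
      have : (t - t1) / T ≤ n := hn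
      have := (div_le_iff₀ hT).1 this
      linarith
    have h1 : x t1 ≤ x t := mono self_mem_Ici ht ht
    have h2 : x t ≤ x (t1 + n * T) := mono ht (by
      simp only [mem_Ici]; nlinarith [hT.le, Nat.cast_nonneg (α := ℝ) n]) hn'
    have h3 : x (t1 + (n : ℤ) * T) = x t1 := per_int hp n t1
    push_cast at h3
    linarith
  intro t s
  obtain ⟨n, hn⟩ := exists_nat_ge ((t1 - t) / T)
  obtain ⟨m, hm⟩ := exists_nat_ge ((t1 - s) / T)
  have hnt : t1 ≤ t + n * T := by
    have := (div_le_iff₀ hT).1 hn; linarith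
  have hms : t1 ≤ s + m * T := by
    have := (div_le_iff₀ hT).1 hm; linarith
  have e1 : x (t + (n : ℤ) * T) = x t := per_int hp n t
  have e2 : x (s + (m : ℤ) * T) = x s := per_int hp m s
  push_cast at e1 e2
  rw [← e1, ← e2, key _ hnt, key _ hms]

lemma const_of_deriv_nonneg {x v : ℝ → ℝ} {T : ℝ} (hT : 0 < T)
    (hd : ∀ t, HasDerivAt x (v t) t) (hv : ∀ t, 0 ≤ v t)
    (hp : ∀ t, x (t + T) = x t) : ∀ t s, x t = x s :=
  const_of_deriv_nonneg_Ici (t1 := 0) hT hd (fun t _ => hv t) hp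

lemma const_of_deriv_nonpos {x v : ℝ → ℝ} {T : ℝ} (hT : 0 < T)
    (hd : ∀ t, HasDerivAt x (v t) t) (hv : ∀ t, v t ≤ 0)
    (hp : ∀ t, x (t + T) = x t) : ∀ t s, x t = x s := by
  have := const_of_deriv_nonneg (x := fun t => -x t) (v := fun t => -v t) hT
    (fun t => (hd t).neg) (fun t => by simpa using hv t) (fun t => by simp [hp t])
  intro t s
  have h := this t s
  simpa using h

/-- derivative of a constant function forced to be zero -/
lemma deriv_eq_zero_of_const {x v : ℝ → ℝ} (hd : ∀ t, HasDerivAt x (v t) t)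
    (hc : ∀ t s, x t = x s) : ∀ t, v t = 0 := by
  intro t
  have h1 : x = fun _ => x 0 := funext fun s => hc s 0
  have h2 : HasDerivAt x 0 t := by rw [h1]; exact hasDerivAt_const t (x 0)
  exact (hd t).unique h2


lemma gronwall_fwd {w h : ℝ → ℝ} (hc : Continuous h)
    (hd : ∀ t, HasDerivAt w (h t * w t) t) {t0 : ℝ} (h0 : w t0 = 0) :
    ∀ t, t0 ≤ t → w t = 0 := by
  intro b hb
  have hcw : Continuous w := by
    rw [continuous_iff_continuousAt]; exact fun t => (hd t).continuousAt
  obtain ⟨C, hC⟩ := (isCompact_Icc (a := t0) (b := b)).exists_bound_of_continuousOn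
    hc.continuousOn
  have bound : ∀ t ∈ Ico t0 b, ‖(fun t => h t * w t) t‖ ≤ C * ‖w t‖ + 0 := by
    intro t ht
    have h2 : ‖h t‖ ≤ C := hC t ⟨ht.1, ht.2.le⟩
    have : ‖h t * w t‖ = ‖h t‖ * ‖w t‖ := norm_mul _ _
    rw [this]
    have : ‖h t‖ * ‖w t‖ ≤ C * ‖w t‖ := mul_le_mul_of_nonneg_right h2 (norm_nonneg _)
    linarith
  have key := norm_le_gronwallBound_of_norm_deriv_right_le (f := w)
    (f' := fun t => h t * w t) (δ := 0) (K := C) (ε := 0) (a := t0) (b := b)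
    hcw.continuousOn (fun t _ => (hd t).hasDerivWithinAt)
    (by simp [h0]) bound
  have h3 := key b ⟨hb, le_refl b⟩
  rw [gronwallBound_ε0_δ0] at h3
  simpa using h3

lemma gronwall_zero {w h : ℝ → ℝ} (hc : Continuous h)
    (hd : ∀ t, HasDerivAt w (h t * w t) t) {t0 : ℝ} (h0 : w t0 = 0) :
    ∀ t, w t = 0 := by
  intro t
  rcases le_total t0 t with ht | ht
  · exact gronwall_fwd hc hd h0 t ht
  · have hd2 : ∀ s, HasDerivAt (fun s => w (2 * t0 - s))
        ((fun s => -h (2 * t0 - s)) s * (fun s => w (2 * t0 - s)) s) s := by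
      intro s
      have hlin : HasDerivAt (fun s : ℝ => 2 * t0 - s) (-1) s := by
        simpa using (hasDerivAt_const s (2 * t0)).fun_sub (hasDerivAt_id s)
      have := (hd (2 * t0 - s)).comp s hlin
      simpa [mul_comm, mul_left_comm, mul_assoc, Function.comp_def] using this
    have hc2 : Continuous (fun s => -h (2 * t0 - s)) :=
      (hc.comp (by continuity)).neg
    have h02 : (fun s => w (2 * t0 - s)) t0 = 0 := by
      show w (2 * t0 - t0) = 0
      rw [show 2 * t0 - t0 = t0 by ring, h0]
    have := gronwall_fwd hc2 hd2 h02 (2 * t0 - t) (by linarith)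
    simpa using this



/-- a periodic solution of a scalar affine ODE is constant -/
lemma affine_const {X : ℝ → ℝ} {T P μ : ℝ} (hT : 0 < T) (hp : ∀ t, X (t + T) = X t)
    (hd : ∀ t, HasDerivAt X (P + μ * X t) t) : ∀ t s, X t = X s := by
  have hcont : Continuous X := by
    rw [continuous_iff_continuousAt]; exact fun t => (hd t).continuousAt
  obtain ⟨t1, ht1⟩ := exists_max hT hcont hp
  obtain ⟨t2, ht2⟩ := exists_min hT hcont hp
  have e1 : P + μ * X t1 = 0 :=
    deriv_zero_at_max (v := fun t => P + μ * X t) (hd t1) ht1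
  have e2 : P + μ * X t2 = 0 :=
    deriv_zero_at_min (v := fun t => P + μ * X t) (hd t2) ht2
  by_cases hμ : μ = 0
  · subst hμ
    have hP : P = 0 := by linarith
    apply const_of_deriv_nonneg_Ici (t1 := 0) hT hd (fun t _ => by simp [hP]) hp
  · have h12 : X t1 = X t2 := by
      have h0 : μ * (X t1 - X t2) = 0 := by linarith
      rcases mul_eq_zero.1 h0 with h | h
      · exact absurd h hμ
      · linarith
    intro t s
    have := ht1 t; have := ht2 t; have := ht1 s; have := ht2 s
    linarith

lemma quadrant_invariant {w1 w2 A B C D : ℝ → ℝ}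
    (hA : Continuous A) (hB : Continuous B) (hC : Continuous C) (hD : Continuous D)
    (hBn : ∀ t, 0 ≤ B t) (hCn : ∀ t, 0 ≤ C t)
    (hd1 : ∀ t, HasDerivAt w1 (A t * w1 t + B t * w2 t) t)
    (hd2 : ∀ t, HasDerivAt w2 (C t * w1 t + D t * w2 t) t)
    {t0 : ℝ} (h10 : 0 ≤ w1 t0) (h20 : 0 ≤ w2 t0) :
    ∀ t, t0 ≤ t → (0 ≤ w1 t ∧ 0 ≤ w2 t) := by
  intro b hb
  have hcw1 : Continuous w1 := by
    rw [continuous_iff_continuousAt]; exact fun t => (hd1 t).continuousAt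
  have hcw2 : Continuous w2 := by
    rw [continuous_iff_continuousAt]; exact fun t => (hd2 t).continuousAt
  obtain ⟨MA, hMA⟩ := (isCompact_Icc (a := t0) (b := b)).exists_bound_of_continuousOn
    hA.continuousOn
  obtain ⟨MB, hMB⟩ := (isCompact_Icc (a := t0) (b := b)).exists_bound_of_continuousOn
    hB.continuousOn
  obtain ⟨MC, hMC⟩ := (isCompact_Icc (a := t0) (b := b)).exists_bound_of_continuousOn
    hC.continuousOn
  obtain ⟨MD, hMD⟩ := (isCompact_Icc (a := t0) (b := b)).exists_bound_of_continuousOn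
    hD.continuousOn
  set M : ℝ := max (max MA MB) (max MC MD) with hM
  have hMA' : ∀ t ∈ Icc t0 b, |A t| ≤ M := fun t ht =>
    le_trans (by simpa using hMA t ht) (le_trans (le_max_left _ _) (le_max_left _ _))
  have hMB' : ∀ t ∈ Icc t0 b, |B t| ≤ M := fun t ht =>
    le_trans (by simpa using hMB t ht) (le_trans (le_max_right _ _) (le_max_left _ _))
  have hMC' : ∀ t ∈ Icc t0 b, |C t| ≤ M := fun t ht =>
    le_trans (by simpa using hMC t ht) (le_trans (le_max_left _ _) (le_max_right _ _))
  have hMD' : ∀ t ∈ Icc t0 b, |D t| ≤ M := fun t ht =>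
    le_trans (by simpa using hMD t ht) (le_trans (le_max_right _ _) (le_max_right _ _))
  have hM0 : 0 ≤ M := le_trans (abs_nonneg (A t0)) (hMA' t0 ⟨le_refl _, hb⟩)
  set N : ℝ := 2 * M + 1 with hN
  have hN0 : 0 < N := by positivity
  -- main claim
  have main : ∀ ε : ℝ, 0 < ε → ∀ s ∈ Icc t0 b,
      0 < w1 s + ε * Real.exp (N * (s - t0)) ∧
      0 < w2 s + ε * Real.exp (N * (s - t0)) := by
    intro ε hε
    by_contra hcon
    push_neg at hcon
    set g1 : ℝ → ℝ := fun s => w1 s + ε * Real.exp (N * (s - t0)) with hg1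
    set g2 : ℝ → ℝ := fun s => w2 s + ε * Real.exp (N * (s - t0)) with hg2
    have hg1c : Continuous g1 := by fun_prop
    have hg2c : Continuous g2 := by fun_prop
    set S : Set ℝ := Icc t0 b ∩ (g1 ⁻¹' Iic 0 ∪ g2 ⁻¹' Iic 0) with hS
    have hSclosed : IsClosed S :=
      (isClosed_Icc).inter ((isClosed_Iic.preimage hg1c).union (isClosed_Iic.preimage hg2c))
    have hSne : S.Nonempty := by
      obtain ⟨s, hs, hbad⟩ := hcon
      refine ⟨s, hs, ?_⟩
      simp only [mem_union, mem_preimage, mem_Iic, hg1, hg2]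
      rcases le_or_gt (w1 s + ε * Real.exp (N * (s - t0))) 0 with h | h
      · exact Or.inl h
      · exact Or.inr (hbad h)
    have hSbdd : BddBelow S := bddBelow_Icc.mono (inter_subset_left)
    set τ : ℝ := sInf S with hτ
    have hτS : τ ∈ S := hSclosed.csInf_mem hSne hSbdd
    have hτIcc : τ ∈ Icc t0 b := hτS.1
    have hg1t0 : 0 < g1 t0 := by
      have : Real.exp (N * (t0 - t0)) = 1 := by simp
      simp only [hg1]; rw [sub_self, mul_zero, Real.exp_zero]; linarith
    have hg2t0 : 0 < g2 t0 := by
      simp only [hg2]; rw [sub_self, mul_zero, Real.exp_zero]; linarith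
    have hτt0 : t0 < τ := by
      rcases lt_or_eq_of_le hτIcc.1 with h | h
      · exact h
      · exfalso
        rcases hτS.2 with h1 | h1 <;> simp only [mem_preimage, mem_Iic] at h1
        · rw [← h] at h1; linarith
        · rw [← h] at h1; linarith
    have hbefore : ∀ s, s ∈ Ico t0 τ → 0 < g1 s ∧ 0 < g2 s := by
      intro s hs
      by_contra hc
      have hsS : s ∈ S := by
        refine ⟨⟨hs.1, le_trans hs.2.le hτIcc.2⟩, ?_⟩
        push_neg at hc
        rcases le_or_gt (g1 s) 0 with h | h
        · exact Or.inl (by simpa using h)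
        · exact Or.inr (by simpa using hc (by simpa using h))
      have := csInf_le hSbdd hsS
      rw [← hτ] at this
      exact absurd this (not_le.2 hs.2)
    -- continuity: g i τ ≥ 0
    have hg1τnn : 0 ≤ g1 τ := by
      have hne : (𝓝[<] τ).NeBot := nhdsLT_neBot τ
      refine ge_of_tendsto ((hg1c.continuousAt.continuousWithinAt (s := Iio τ)).tendsto) ?_
      filter_upwards [Ioo_mem_nhdsLT hτt0] with s hs
      exact (hbefore s ⟨hs.1.le, hs.2⟩).1.le
    have hg2τnn : 0 ≤ g2 τ := by
      have hne : (𝓝[<] τ).NeBot := nhdsLT_neBot τ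
      refine ge_of_tendsto ((hg2c.continuousAt.continuousWithinAt (s := Iio τ)).tendsto) ?_
      filter_upwards [Ioo_mem_nhdsLT hτt0] with s hs
      exact (hbefore s ⟨hs.1.le, hs.2⟩).2.le
    set E : ℝ := Real.exp (N * (τ - t0)) with hE
    have hE0 : 0 < E := Real.exp_pos _
    -- derivative of the exponential part
    have hexpd : HasDerivAt (fun s => ε * Real.exp (N * (s - t0))) (ε * (E * N)) τ := by
      have h1 : HasDerivAt (fun s : ℝ => N * (s - t0)) N τ := by
        simpa using ((hasDerivAt_id τ).sub_const t0).const_mul N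
      have h2 := (Real.hasDerivAt_exp (N * (τ - t0))).comp τ h1
      simpa [hE, mul_comm] using h2.const_mul ε
    -- the two symmetric cases
    have key : ∀ (u1 u2 P Q R Sc : ℝ → ℝ),
        Continuous u1 → Continuous u2 →
        (∀ t, HasDerivAt u1 (P t * u1 t + Q t * u2 t) t) →
        (∀ t ∈ Icc t0 b, |P t| ≤ M) → (∀ t, 0 ≤ Q t) → (∀ t ∈ Icc t0 b, |Q t| ≤ M) →
        (u1 τ + ε * E = 0) → (0 ≤ u2 τ + ε * E) →
        (∀ s, s ∈ Ico t0 τ → 0 < u1 s + ε * Real.exp (N * (s - t0))) → False := by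
      intro u1 u2 P Q R Sc hcu1 hcu2 hdu1 hPb hQn hQb hu1τ hu2τ hbef
      set G : ℝ → ℝ := fun s => u1 s + ε * Real.exp (N * (s - t0)) with hG
      have hGd : HasDerivAt G (P τ * u1 τ + Q τ * u2 τ + ε * (E * N)) τ :=
        (hdu1 τ).add hexpd
      have hu1τ' : u1 τ = -(ε * E) := by linarith
      have hder_pos : 0 < P τ * u1 τ + Q τ * u2 τ + ε * (E * N) := by
        have h1 : P τ * u1 τ ≥ -(M * (ε * E)) := by
          have habs : |P τ * u1 τ| ≤ M * (ε * E) := by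
            rw [abs_mul, hu1τ', abs_neg, abs_of_pos (mul_pos hε hE0)]
            exact mul_le_mul_of_nonneg_right (hPb τ hτIcc) (mul_pos hε hE0).le
          linarith [neg_abs_le (P τ * u1 τ)]
        have h2 : Q τ * u2 τ ≥ -(M * (ε * E)) := by
          have hq1 : Q τ * u2 τ ≥ Q τ * (-(ε * E)) :=
            mul_le_mul_of_nonneg_left (by linarith) (hQn τ)
          have hq2 : Q τ * (ε * E) ≤ M * (ε * E) := by
            have h5 : Q τ ≤ M := le_trans (le_abs_self _) (hQb τ hτIcc)
            exact mul_le_mul_of_nonneg_right h5 (mul_pos hε hE0).le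
          nlinarith
        have : ε * (E * N) = 2 * M * (ε * E) + ε * E := by rw [hN]; ring
        nlinarith
      -- slope contradiction
      have hslope : Filter.Tendsto (slope G τ) (𝓝[<] τ)
          (𝓝 (P τ * u1 τ + Q τ * u2 τ + ε * (E * N))) :=
        (hasDerivAt_iff_tendsto_slope.1 hGd).mono_left
          (nhdsWithin_mono τ (fun s hs => ne_of_lt hs))
      have hev1 : ∀ᶠ s in 𝓝[<] τ, 0 < slope G τ s :=
        hslope.eventually (lt_mem_nhds hder_pos)
      have hev2 : ∀ᶠ s in 𝓝[<] τ, s ∈ Ioo t0 τ := Ioo_mem_nhdsLT hτt0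
      have hne : (𝓝[<] τ).NeBot := nhdsLT_neBot τ
      obtain ⟨s, hs1, hs2⟩ := (hev1.and hev2).exists
      have hGτ : G τ = 0 := by simp only [hG]; rw [← hE] at *; linarith
      have hslope_eq : slope G τ s = G s / (s - τ) := by
        rw [slope_def_field, hGτ, sub_zero]
      rw [hslope_eq] at hs1
      have hsτ : s - τ < 0 := by linarith [hs2.2]
      have hGs : G s < 0 := by
        have hne' : s - τ ≠ 0 := ne_of_lt hsτ
        have h7 : G s / (s - τ) * (s - τ) < 0 := mul_neg_of_pos_of_neg hs1 hsτ
        rwa [div_mul_cancel₀ _ hne'] at h7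
      exact absurd (hbef s ⟨hs2.1.le, hs2.2⟩) (by simp only [hG] at hGs ⊢; linarith)
    rcases hτS.2 with h1 | h1 <;> simp only [mem_preimage, mem_Iic] at h1
    · have hg1τ : g1 τ = 0 := le_antisymm h1 hg1τnn
      exact key w1 w2 A B C D hcw1 hcw2 hd1 hMA' hBn hMB'
        (by simp only [hg1, ← hE] at hg1τ; linarith)
        (by simp only [hg2, ← hE] at hg2τnn; linarith)
        (fun s hs => (hbefore s hs).1)
    · have hg2τ : g2 τ = 0 := le_antisymm h1 hg2τnn
      exact key w2 w1 D C A B hcw2 hcw1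
        (fun t => by have := hd2 t; rwa [add_comm] at this)
        hMD' hCn hMC'
        (by simp only [hg2, ← hE] at hg2τ; linarith)
        (by simp only [hg1, ← hE] at hg1τnn; linarith)
        (fun s hs => (hbefore s hs).2)
  -- conclude
  have conc : ∀ (u : ℝ → ℝ), (∀ ε : ℝ, 0 < ε → 0 < u b + ε * Real.exp (N * (b - t0))) →
      0 ≤ u b := by
    intro u hu
    by_contra hc
    push_neg at hc
    have hEb0 : (0:ℝ) < Real.exp (N * (b - t0)) := Real.exp_pos _
    have h2 := hu (-u b / (2 * Real.exp (N * (b - t0)))) (div_pos (by linarith) (by positivity))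
    have h3 : -u b / (2 * Real.exp (N * (b - t0))) * Real.exp (N * (b - t0)) = -u b / 2 := by
      field_simp
    rw [h3] at h2
    linarith
  constructor
  · exact conc w1 (fun ε hε => (main ε hε b ⟨hb, le_refl b⟩).1)
  · exact conc w2 (fun ε hε => (main ε hε b ⟨hb, le_refl b⟩).2)


/-- Master lemma: planar cooperative variational structure along a periodic pair forces
both components to be constant. -/
lemma planar_coop_const {u1 u2 w1 w2 A B C D : ℝ → ℝ} {T : ℝ} (hT : 0 < T)
    (hp1 : ∀ t, u1 (t + T) = u1 t) (hp2 : ∀ t, u2 (t + T) = u2 t)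
    (hu1 : ∀ t, HasDerivAt u1 (w1 t) t) (hu2 : ∀ t, HasDerivAt u2 (w2 t) t)
    (hA : Continuous A) (hB : Continuous B) (hC : Continuous C) (hD : Continuous D)
    (hBn : ∀ t, 0 ≤ B t) (hCn : ∀ t, 0 ≤ C t)
    (hd1 : ∀ t, HasDerivAt w1 (A t * w1 t + B t * w2 t) t)
    (hd2 : ∀ t, HasDerivAt w2 (C t * w1 t + D t * w2 t) t) :
    (∀ t s, u1 t = u1 s) ∧ (∀ t s, u2 t = u2 s) := by
  have hcu1 : Continuous u1 := by
    rw [continuous_iff_continuousAt]; exact fun t => (hu1 t).continuousAt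
  obtain ⟨t1, ht1⟩ := exists_max hT hcu1 hp1
  have hw1t1 : w1 t1 = 0 := deriv_zero_at_max (hu1 t1) ht1
  rcases le_total 0 (w2 t1) with hs | hs
  · -- nonnegative quadrant invariant from t1 on
    have hinv := quadrant_invariant hA hB hC hD hBn hCn hd1 hd2
      (t0 := t1) (le_of_eq hw1t1.symm) hs
    constructor
    · exact const_of_deriv_nonneg_Ici (t1 := t1) hT hu1 (fun t ht => (hinv t ht).1) hp1
    · exact const_of_deriv_nonneg_Ici (t1 := t1) hT hu2 (fun t ht => (hinv t ht).2) hp2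
  · -- nonpositive quadrant
    have hd1' : ∀ t, HasDerivAt (fun t => -w1 t)
        (A t * (-w1 t) + B t * (-w2 t)) t := by
      intro t
      have := (hd1 t).neg
      exact this.congr_deriv (by ring)
    have hd2' : ∀ t, HasDerivAt (fun t => -w2 t)
        (C t * (-w1 t) + D t * (-w2 t)) t := by
      intro t
      have := (hd2 t).neg
      exact this.congr_deriv (by ring)
    have hinv := quadrant_invariant hA hB hC hD hBn hCn hd1' hd2'
      (t0 := t1) (by simp [hw1t1]) (by simpa using hs)
    constructor
    · have := const_of_deriv_nonneg_Ici (x := fun t => -u1 t) (v := fun t => -w1 t)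
        (t1 := t1) hT (fun t => (hu1 t).neg) (fun t ht => (hinv t ht).1)
        (fun t => by simp [hp1 t])
      intro t s; have h := this t s; simpa using h
    · have := const_of_deriv_nonneg_Ici (x := fun t => -u2 t) (v := fun t => -w2 t)
        (t1 := t1) hT (fun t => (hu2 t).neg) (fun t ht => (hinv t ht).2)
        (fun t => by simp [hp2 t])
      intro t s; have h := this t s; simpa using h

/-- competitive version -/
lemma planar_comp_const {u1 u2 w1 w2 A B C D : ℝ → ℝ} {T : ℝ} (hT : 0 < T)
    (hp1 : ∀ t, u1 (t + T) = u1 t) (hp2 : ∀ t, u2 (t + T) = u2 t)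
    (hu1 : ∀ t, HasDerivAt u1 (w1 t) t) (hu2 : ∀ t, HasDerivAt u2 (w2 t) t)
    (hA : Continuous A) (hB : Continuous B) (hC : Continuous C) (hD : Continuous D)
    (hBn : ∀ t, B t ≤ 0) (hCn : ∀ t, C t ≤ 0)
    (hd1 : ∀ t, HasDerivAt w1 (A t * w1 t + B t * w2 t) t)
    (hd2 : ∀ t, HasDerivAt w2 (C t * w1 t + D t * w2 t) t) :
    (∀ t s, u1 t = u1 s) ∧ (∀ t s, u2 t = u2 s) := by
  have hd1' : ∀ t, HasDerivAt w1 (A t * w1 t + (-B t) * (-w2 t)) t := by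
    intro t; have := hd1 t; simpa [mul_neg, neg_mul] using this
  have hd2' : ∀ t, HasDerivAt (fun t => -w2 t) ((-C t) * w1 t + D t * (-w2 t)) t := by
    intro t
    have := (hd2 t).neg
    exact this.congr_deriv (by ring)
  have key := planar_coop_const (u2 := fun t => -u2 t) (w2 := fun t => -w2 t)
    (A := A) (B := fun t => -B t) (C := fun t => -C t) (D := D) hT hp1
    (fun t => by simp [hp2 t]) hu1 (fun t => (hu2 t).neg)
    hA hB.neg hC.neg hD (fun t => by simpa using hBn t) (fun t => by simpa using hCn t)
    hd1' hd2'
  exact ⟨key.1, fun t s => by have := key.2 t s; simpa using this⟩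


set_option maxHeartbeats 2000000 in
lemma case2 {X Y : ℝ → ℝ} {T : ℝ} (hT : 0 < T)
    (hpX : ∀ t, X (t + T) = X t) (hpY : ∀ t, Y (t + T) = Y t)
    (hX0 : ∀ t, 0 ≤ X t) (hY0 : ∀ t, 0 ≤ Y t)
    {P a b q c d : ℝ} (hP : 0 ≤ P) (hq : 0 ≤ q) (hc : 0 ≤ c)
    (hdX : ∀ t, HasDerivAt X (P + a * X t + b * (X t * Y t)) t)
    (hdY : ∀ t, HasDerivAt Y (q + c * X t + d * (X t * Y t)) t) :
    (∀ t s, X t = X s) ∧ (∀ t s, Y t = Y s) := by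
  have hcX : Continuous X := by
    rw [continuous_iff_continuousAt]; exact fun t => (hdX t).continuousAt
  have hcY : Continuous Y := by
    rw [continuous_iff_continuousAt]; exact fun t => (hdY t).continuousAt
  rcases le_or_gt 0 d with hd | hd
  · -- d ≥ 0 : Y' ≥ 0 everywhere
    have hYc : ∀ t s, Y t = Y s := by
      apply const_of_deriv_nonneg hT hdY _ hpY
      intro t
      have h1 : 0 ≤ c * X t := mul_nonneg hc (hX0 t)
      have h2 : 0 ≤ d * (X t * Y t) := mul_nonneg hd (mul_nonneg (hX0 t) (hY0 t))
      linarith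
    have hdX' : ∀ t, HasDerivAt X (P + (a + b * Y 0) * X t) t := by
      intro t
      have h1 := hdX t
      have h2 : P + a * X t + b * (X t * Y t) = P + (a + b * Y 0) * X t := by
        rw [hYc t 0]; ring
      rwa [h2] at h1
    exact ⟨affine_const hT hpX hdX', hYc⟩
  · -- d < 0
    set K : ℝ := -d with hKdef
    have hK0 : 0 < K := by simp [hKdef]; linarith
    set Z : ℝ → ℝ := fun t => Y t - c / K with hZdef
    have hpZ : ∀ t, Z (t + T) = Z t := fun t => by simp only [hZdef, hpY t]
    have hcZ : Continuous Z := by fun_prop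
    have hdZ : ∀ t, HasDerivAt Z (q - K * (X t * Z t)) t := by
      intro t
      have h1 := (hdY t).sub_const (c / K)
      have h2 : q + c * X t + d * (X t * Y t) = q - K * (X t * (Y t - c / K)) := by
        have hd' : d = -K := by simp [hKdef]
        rw [hd']; field_simp; ring
      rw [h2] at h1
      exact h1
    set ea : ℝ := a + b * c / K with headef
    have hdX' : ∀ t, HasDerivAt X (P + (ea + b * Z t) * X t) t := by
      intro t
      have h1 := hdX t
      have h2 : P + a * X t + b * (X t * Y t) = P + (ea + b * (Y t - c / K)) * X t := by
        simp only [headef]; field_simp; ring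
      rw [h2] at h1
      exact h1
    obtain ⟨tm, htm⟩ := exists_min hT hcZ hpZ
    rcases le_or_gt (Z tm) 0 with hm | hm
    · -- min of Z is ≤ 0
      have hd0 : q - K * (X tm * Z tm) = 0 := deriv_zero_at_min (v := fun t => q - K * (X t * Z t)) (hdZ tm) htm
      have hq0 : q = 0 := by
        have h8 : 0 ≤ K * (X tm * (- Z tm)) :=
          mul_nonneg hK0.le (mul_nonneg (hX0 tm) (by linarith))
        nlinarith
      by_cases hz0 : ∃ t1, Z t1 = 0
      · obtain ⟨t1, ht1⟩ := hz0
        have hZ0 : ∀ t, Z t = 0 := by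
          apply gronwall_zero (h := fun t => -(K * X t)) (by fun_prop) _ ht1
          intro t
          have := hdZ t; rw [hq0] at this
          convert this using 1; ring
        have hYconst : ∀ t s, Y t = Y s := by
          intro t s
          have h1 := hZ0 t; have h2 := hZ0 s
          simp only [hZdef] at h1 h2; linarith
        have hdX'' : ∀ t, HasDerivAt X (P + ea * X t) t := by
          intro t
          have := hdX' t; rw [hZ0 t] at this
          simpa using this
        exact ⟨affine_const hT hpX hdX'', hYconst⟩
      · push_neg at hz0
        have hmneg : Z tm < 0 := lt_of_le_of_ne hm (hz0 tm)
        have hZneg : ∀ t, Z t < 0 := by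
          intro t
          rcases lt_or_ge (Z t) 0 with h | h
          · exact h
          · exfalso
            have hmem : (0:ℝ) ∈ uIcc (Z tm) (Z t) := by
              rw [mem_uIcc]; left; exact ⟨hmneg.le, h⟩
            obtain ⟨t2, _, ht2⟩ := intermediate_value_uIcc hcZ.continuousOn hmem
            exact hz0 t2 ht2
        have hZconst : ∀ t s, Z t = Z s := by
          apply const_of_deriv_nonneg hT hdZ _ hpZ
          intro t
          have h8 : 0 ≤ K * (X t * (- Z t)) :=
            mul_nonneg hK0.le (mul_nonneg (hX0 t) (by linarith [hZneg t]))
          nlinarith [hq0]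
        have hZ'0 := deriv_eq_zero_of_const hdZ hZconst
        have hXzero : ∀ t, X t = 0 := by
          intro t
          have h1 := hZ'0 t
          have h2 : Z t = Z tm := hZconst t tm
          rw [hq0, h2] at h1
          have h3 : X t * Z tm = 0 := by
            have h4 : K * (X t * Z tm) = 0 := by linarith
            exact (mul_eq_zero.1 h4).resolve_left hK0.ne'
          exact (mul_eq_zero.1 h3).resolve_right (ne_of_lt hmneg)
        refine ⟨fun t s => by rw [hXzero t, hXzero s], fun t s => ?_⟩
        have := hZconst t s; simp only [hZdef] at this; linarith
    · -- Z > 0 everywhere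
      have hZpos : ∀ t, 0 < Z t := fun t => lt_of_lt_of_le hm (htm t)
      obtain ⟨tμ, htμ⟩ := exists_min hT hcX hpX
      rcases eq_or_lt_of_le (hX0 tμ) with hx0 | hx0
      · -- min of X is 0
        have hd0 : P + (ea + b * Z tμ) * X tμ = 0 := deriv_zero_at_min (v := fun t => P + (ea + b * Z t) * X t) (hdX' tμ) htμ
        have hP0 : P = 0 := by rw [← hx0] at hd0; simpa using hd0
        have hXzero : ∀ t, X t = 0 := by
          apply gronwall_zero (h := fun t => ea + b * Z t) (by fun_prop) _ hx0.symm
          intro t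
          have := hdX' t; rw [hP0] at this
          convert this using 1; ring
        have hdZ' : ∀ t, HasDerivAt Z (q + 0 * Z t) t := by
          intro t
          have := hdZ t; rw [hXzero t] at this
          convert this using 1; ring
        have hZconst := affine_const hT hpZ hdZ'
        refine ⟨fun t s => by rw [hXzero t, hXzero s], fun t s => ?_⟩
        have := hZconst t s; simp only [hZdef] at this; linarith
      · have hXpos : ∀ t, 0 < X t := fun t => lt_of_lt_of_le hx0 (htμ t)
        rcases lt_trichotomy b 0 with hb | hb | hb
        · -- b < 0 : competitive system in (log X, Z)
          set DX : ℝ → ℝ := fun t => P + (ea + b * Z t) * X t with hDX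
          set DZ : ℝ → ℝ := fun t => q - K * (X t * Z t) with hDZ
          set u1 : ℝ → ℝ := fun t => Real.log (X t) with hu1def
          set w1 : ℝ → ℝ := fun t => P / X t + ea + b * Z t with hw1def
          have hu1 : ∀ t, HasDerivAt u1 (w1 t) t := by
            intro t
            have h1 := (hdX' t).log (hXpos t).ne'
            have h2 : (P + (ea + b * Z t) * X t) / X t = w1 t := by
              rw [hw1def]; field_simp [(hXpos t).ne']; ring
            rwa [h2] at h1
          have hd1 : ∀ t, HasDerivAt w1
              ((fun t => -(P / X t)) t * w1 t + (fun _ => b) t * DZ t) t := by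
            intro t
            have hdiv : HasDerivAt (fun t => P / X t)
                ((0 * X t - P * DX t) / X t ^ 2) t :=
              (hasDerivAt_const t P).div (hdX' t) (hXpos t).ne'
            have hsum : HasDerivAt w1 ((0 * X t - P * DX t) / X t ^ 2 + b * DZ t) t := by
              have := (hdiv.add_const ea).fun_add ((hdZ t).const_mul b)
              simpa [hw1def] using this
            have heq : (0 * X t - P * DX t) / X t ^ 2 + b * DZ t
                = -(P / X t) * w1 t + b * DZ t := by
              rw [hw1def, hDX]
              field_simp [(hXpos t).ne']
              ring
            rwa [heq] at hsum
          have hd2 : ∀ t, HasDerivAt DZ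
              ((fun t => -(K * (X t * Z t))) t * w1 t + (fun t => -(K * X t)) t * DZ t) t := by
            intro t
            have hmul : HasDerivAt (fun t => X t * Z t) (DX t * Z t + X t * DZ t) t :=
              (hdX' t).mul (hdZ t)
            have hsum : HasDerivAt DZ (0 - K * (DX t * Z t + X t * DZ t)) t := by
              have := (hasDerivAt_const (𝕜 := ℝ) t q).fun_sub (hmul.const_mul K)
              simpa [hDZ] using this
            have heq : 0 - K * (DX t * Z t + X t * DZ t)
                = -(K * (X t * Z t)) * w1 t + -(K * X t) * DZ t := by
              rw [hw1def, hDX]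
              field_simp [(hXpos t).ne']
              ring
            rwa [heq] at hsum
          have key := planar_comp_const (T := T) hT
            (fun t => by simp only [hu1def, hpX t])
            (fun t => by simp only [hZdef, hpY t])
            hu1 hdZ
            ((continuous_const.div hcX (fun t => (hXpos t).ne')).neg)
            continuous_const (by fun_prop) (by fun_prop)
            (fun t => hb.le)
            (fun t => neg_nonpos.2 (mul_nonneg hK0.le
              (mul_nonneg (hX0 t) (hZpos t).le)))
            hd1 hd2
          refine ⟨fun t s => ?_, fun t s => ?_⟩
          · have h1 := key.1 t s
            have h2 : X t = Real.exp (u1 t) := (Real.exp_log (hXpos t)).symm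
            have h3 : X s = Real.exp (u1 s) := (Real.exp_log (hXpos s)).symm
            rw [h2, h3, h1]
          · have := key.2 t s; simp only [hZdef] at this; linarith
        · -- b = 0
          subst hb
          have hdX'' : ∀ t, HasDerivAt X (P + ea * X t) t := by
            intro t; have := hdX' t
            convert this using 1; ring
          have hXconst := affine_const hT hpX hdX''
          have hdZ' : ∀ t, HasDerivAt Z (q + (-(K * X 0)) * Z t) t := by
            intro t; have := hdZ t
            rw [hXconst t 0] at this
            convert this using 1; ring
          have hZconst := affine_const hT hpZ hdZ'
          refine ⟨hXconst, fun t s => ?_⟩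
          have := hZconst t s; simp only [hZdef] at this; linarith
        · -- b > 0
          rcases le_or_gt 0 ea with hea | hea
          · -- L = K X + b Z is nondecreasing
            have hdL : ∀ t, HasDerivAt (fun t => K * X t + b * Z t)
                ((K * P + b * q) + (K * ea) * X t) t := by
              intro t
              have := ((hdX' t).const_mul K).add ((hdZ t).const_mul b)
              exact this.congr_deriv (by ring)
            have hLconst := const_of_deriv_nonneg hT hdL
              (fun t => by
                have h1 : 0 ≤ K * P := mul_nonneg hK0.le hP
                have h2 : 0 ≤ b * q := mul_nonneg hb.le hq
                have h3 : 0 ≤ K * ea * X t := mul_nonneg (mul_nonneg hK0.le hea) (hX0 t)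
                linarith)
              (fun t => by simp only [hpX t, hpZ t])
            have hL0 := deriv_eq_zero_of_const hdL hLconst
            have hP0 : P = 0 ∧ q = 0 := by
              have h1 := hL0 0
              constructor <;> nlinarith [mul_nonneg (mul_nonneg hK0.le hea) (hX0 0),
                mul_nonneg hK0.le hP, mul_nonneg hb.le hq]
            have hZconst := const_of_deriv_nonpos hT hdZ
              (fun t => by nlinarith [mul_nonneg hK0.le (mul_nonneg (hX0 t) (hZpos t).le)])
              hpZ
            have hZ'0 := deriv_eq_zero_of_const hdZ hZconst
            exfalso
            have h1 := hZ'0 0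
            rw [hP0.2] at h1
            nlinarith [mul_pos hK0 (mul_pos (hXpos 0) (hZpos 0))]
          · -- ea < 0 : Lyapunov function
            by_cases hPq : P = 0 ∧ q = 0
            · have hZconst := const_of_deriv_nonpos hT hdZ
                (fun t => by
                  rw [hPq.2]
                  nlinarith [mul_nonneg hK0.le (mul_nonneg (hX0 t) (hZpos t).le)])
                hpZ
              have hZ'0 := deriv_eq_zero_of_const hdZ hZconst
              exfalso
              have h1 := hZ'0 0
              rw [hPq.2] at h1
              nlinarith [mul_pos hK0 (mul_pos (hXpos 0) (hZpos 0))]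
            · -- the main Lyapunov case
              have hnum : 0 < K * P + b * q := by
                rcases (not_and_or.1 hPq) with h | h
                · have : 0 < P := lt_of_le_of_ne hP (Ne.symm h)
                  nlinarith [mul_nonneg hb.le hq]
                · have : 0 < q := lt_of_le_of_ne hq (Ne.symm h)
                  nlinarith [mul_nonneg hK0.le hP]
              set xb : ℝ := (K * P + b * q) / (-(K * ea)) with hxbdef
              have hxb : 0 < xb := div_pos hnum (by nlinarith)
              set zb : ℝ := q / (K * xb) with hzbdef
              have hzb : 0 ≤ zb := div_nonneg hq (by positivity)
              set DX : ℝ → ℝ := fun t => P + (ea + b * Z t) * X t with hDX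
              set DZ : ℝ → ℝ := fun t => q - K * (X t * Z t) with hDZ
              have hdV : ∀ t, HasDerivAt
                  (fun t => K * (X t - xb * Real.log (X t)) + b * (Z t - zb * Real.log (Z t)))
                  (K * (DX t - xb * (DX t / X t)) + b * (DZ t - zb * (DZ t / Z t))) t := by
                intro t
                have h1 : HasDerivAt (fun t => X t - xb * Real.log (X t))
                    (DX t - xb * (DX t / X t)) t :=
                  (hdX' t).sub (((hdX' t).log (hXpos t).ne').const_mul xb)
                have h2 : HasDerivAt (fun t => Z t - zb * Real.log (Z t))
                    (DZ t - zb * (DZ t / Z t)) t :=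
                  (hdZ t).sub (((hdZ t).log (hZpos t).ne').const_mul zb)
                exact (h1.const_mul K).add (h2.const_mul b)
              have hiden : ∀ t, K * (DX t - xb * (DX t / X t)) + b * (DZ t - zb * (DZ t / Z t))
                  = -((K * P) * (X t - xb)^2 / (X t * xb)) - ((K * b * xb / Z t) * (Z t - zb)^2) := by
                intro t
                have hxbne : xb ≠ 0 := hxb.ne'
                have hXne : X t ≠ 0 := (hXpos t).ne'
                have hZne : Z t ≠ 0 := (hZpos t).ne'
                have heane : ea ≠ 0 := hea.ne
                have hKne : K ≠ 0 := hK0.ne'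
                have hnumne : K * P + b * q ≠ 0 := hnum.ne'
                clear_value DX DZ zb xb ea Z K
                subst hDX hDZ hzbdef hxbdef
                beta_reduce
                clear hdX hdY hdZ hdX' hdV htm htμ hXpos hZpos hX0 hY0 hpX hpY hpZ hcX hcY hcZ
                field_simp
                ring
              have hVconst := const_of_deriv_nonpos hT hdV
                (fun t => by
                  rw [hiden t]
                  have h1 : 0 ≤ (K * P) * (X t - xb)^2 / (X t * xb) :=
                    div_nonneg (mul_nonneg (mul_nonneg hK0.le hP) (sq_nonneg _))
                      (mul_nonneg (hX0 t) hxb.le)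
                  have h2 : 0 ≤ (K * b * xb / Z t) * (Z t - zb)^2 :=
                    mul_nonneg (div_nonneg (mul_nonneg (mul_nonneg hK0.le hb.le) hxb.le)
                      (hZpos t).le) (sq_nonneg _)
                  linarith)
                (fun t => by simp only [hpX t, hpZ t])
              have hV0 := deriv_eq_zero_of_const hdV hVconst
              have hZeq : ∀ t, Z t = zb := by
                intro t
                have h1 := hV0 t
                rw [hiden t] at h1
                have h2 : 0 ≤ (K * P) * (X t - xb)^2 / (X t * xb) :=
                  div_nonneg (mul_nonneg (mul_nonneg hK0.le hP) (sq_nonneg _))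
                    (mul_nonneg (hX0 t) hxb.le)
                have h3 : 0 ≤ (K * b * xb / Z t) * (Z t - zb)^2 :=
                  mul_nonneg (div_nonneg (mul_nonneg (mul_nonneg hK0.le hb.le) hxb.le)
                    (hZpos t).le) (sq_nonneg _)
                have h4 : (K * b * xb / Z t) * (Z t - zb)^2 = 0 := by linarith
                have h5 : K * b * xb / Z t > 0 :=
                  div_pos (mul_pos (mul_pos hK0 hb) hxb) (hZpos t)
                have h6 : (Z t - zb)^2 = 0 := by
                  rcases mul_eq_zero.1 h4 with h | h
                  · exact absurd h h5.ne'
                  · exact h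
                have := pow_eq_zero_iff (n := 2) (by norm_num) |>.1 h6
                linarith
              have hZconst : ∀ t s, Z t = Z s := fun t s => by rw [hZeq t, hZeq s]
              have hZ'0 := deriv_eq_zero_of_const hdZ hZconst
              rcases eq_or_lt_of_le hq with hq0 | hq0
              · exfalso
                have hzb0 : zb = 0 := by rw [hzbdef, ← hq0]; simp
                have hZp := hZpos 0
                rw [hZeq 0, hzb0] at hZp
                exact lt_irrefl 0 hZp
              · have hzbpos : 0 < zb := by rw [hzbdef]; positivity
                have hXeq : ∀ t, X t = q / (K * zb) := by
                  intro t
                  have h1 := hZ'0 t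
                  rw [hZeq t] at h1
                  field_simp
                  linarith
                refine ⟨fun t s => by rw [hXeq t, hXeq s], fun t s => ?_⟩
                have := hZconst t s; simp only [hZdef] at this; linarith

lemma case1 {X Y : ℝ → ℝ} {T : ℝ} (hT : 0 < T)
    (hpX : ∀ t, X (t + T) = X t) (hpY : ∀ t, Y (t + T) = Y t)
    {g00 g01 g02 g10 g11 g12 : ℝ} (h02 : 0 ≤ g02) (h11 : 0 ≤ g11)
    (hdX : ∀ t, HasDerivAt X (g00 + g01 * X t + g02 * Y t) t)
    (hdY : ∀ t, HasDerivAt Y (g10 + g11 * X t + g12 * Y t) t) :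
    (∀ t s, X t = X s) ∧ (∀ t s, Y t = Y s) := by
  have hdF : ∀ t, HasDerivAt (fun t => g00 + g01 * X t + g02 * Y t)
      ((fun _ : ℝ => g01) t * (g00 + g01 * X t + g02 * Y t)
        + (fun _ : ℝ => g02) t * (g10 + g11 * X t + g12 * Y t)) t := by
    intro t
    have h1 := ((hasDerivAt_const t g00).add ((hdX t).const_mul g01)).add
      ((hdY t).const_mul g02)
    exact h1.congr_deriv (by ring)
  have hdG : ∀ t, HasDerivAt (fun t => g10 + g11 * X t + g12 * Y t)
      ((fun _ : ℝ => g11) t * (g00 + g01 * X t + g02 * Y t)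
        + (fun _ : ℝ => g12) t * (g10 + g11 * X t + g12 * Y t)) t := by
    intro t
    have h1 := ((hasDerivAt_const t g10).add ((hdX t).const_mul g11)).add
      ((hdY t).const_mul g12)
    exact h1.congr_deriv (by ring)
  exact planar_coop_const hT hpX hpY hdX hdY continuous_const continuous_const
    continuous_const continuous_const (fun _ => h02) (fun _ => h11) hdF hdG

lemma case3 {X Y : ℝ → ℝ} {T : ℝ} (hT : 0 < T)
    (hpX : ∀ t, X (t + T) = X t) (hpY : ∀ t, Y (t + T) = Y t)
    (hX0 : ∀ t, 0 ≤ X t)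
    {g00 g01 g02 g10 g11 g12 : ℝ} (h02 : 0 ≤ g02) (h11 : 0 ≤ g11)
    (hdX : ∀ t, HasDerivAt X (g00 + g01 * X t ^ 2 + g02 * Y t) t)
    (hdY : ∀ t, HasDerivAt Y (g10 + g11 * X t ^ 2 + g12 * Y t) t) :
    (∀ t s, X t = X s) ∧ (∀ t s, Y t = Y s) := by
  have hcX : Continuous X := by
    rw [continuous_iff_continuousAt]; exact fun t => (hdX t).continuousAt
  have hdF : ∀ t, HasDerivAt (fun t => g00 + g01 * X t ^ 2 + g02 * Y t)
      ((fun t : ℝ => 2 * g01 * X t) t * (g00 + g01 * X t ^ 2 + g02 * Y t)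
        + (fun _ : ℝ => g02) t * (g10 + g11 * X t ^ 2 + g12 * Y t)) t := by
    intro t
    have h1 := ((hasDerivAt_const t g00).add (((hdX t).pow 2).const_mul g01)).add
      ((hdY t).const_mul g02)
    exact h1.congr_deriv (by ring)
  have hdG : ∀ t, HasDerivAt (fun t => g10 + g11 * X t ^ 2 + g12 * Y t)
      ((fun t : ℝ => 2 * g11 * X t) t * (g00 + g01 * X t ^ 2 + g02 * Y t)
        + (fun _ : ℝ => g12) t * (g10 + g11 * X t ^ 2 + g12 * Y t)) t := by
    intro t
    have h1 := ((hasDerivAt_const t g10).add (((hdX t).pow 2).const_mul g11)).add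
      ((hdY t).const_mul g12)
    exact h1.congr_deriv (by ring)
  exact planar_coop_const hT hpX hpY hdX hdY (by fun_prop) continuous_const
    (by fun_prop) continuous_const (fun _ => h02)
    (fun t => mul_nonneg (by linarith) (hX0 t)) hdF hdG

lemma case4 {X Y : ℝ → ℝ} {T : ℝ} (hT : 0 < T)
    (hpX : ∀ t, X (t + T) = X t) (hpY : ∀ t, Y (t + T) = Y t)
    (hX0 : ∀ t, 0 ≤ X t)
    {g00 g01 g02 g10 g11 g12 : ℝ} (h02 : 0 ≤ g02) (h10 : 0 ≤ g10) (h11 : 0 ≤ g11)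
    (hdX : ∀ t, HasDerivAt X (g00 * X t + g01 * X t ^ 2 + g02 * Y t) t)
    (hdY : ∀ t, HasDerivAt Y (g10 * X t + g11 * X t ^ 2 + g12 * Y t) t) :
    (∀ t s, X t = X s) ∧ (∀ t s, Y t = Y s) := by
  have hcX : Continuous X := by
    rw [continuous_iff_continuousAt]; exact fun t => (hdX t).continuousAt
  have hdF : ∀ t, HasDerivAt (fun t => g00 * X t + g01 * X t ^ 2 + g02 * Y t)
      ((fun t : ℝ => g00 + 2 * g01 * X t) t * (g00 * X t + g01 * X t ^ 2 + g02 * Y t)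
        + (fun _ : ℝ => g02) t * (g10 * X t + g11 * X t ^ 2 + g12 * Y t)) t := by
    intro t
    have h1 := (((hdX t).const_mul g00).add (((hdX t).pow 2).const_mul g01)).add
      ((hdY t).const_mul g02)
    exact h1.congr_deriv (by ring)
  have hdG : ∀ t, HasDerivAt (fun t => g10 * X t + g11 * X t ^ 2 + g12 * Y t)
      ((fun t : ℝ => g10 + 2 * g11 * X t) t * (g00 * X t + g01 * X t ^ 2 + g02 * Y t)
        + (fun _ : ℝ => g12) t * (g10 * X t + g11 * X t ^ 2 + g12 * Y t)) t := by
    intro t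
    have h1 := (((hdX t).const_mul g10).add (((hdX t).pow 2).const_mul g11)).add
      ((hdY t).const_mul g12)
    exact h1.congr_deriv (by ring)
  exact planar_coop_const hT hpX hpY hdX hdY (by fun_prop) continuous_const
    (by fun_prop) continuous_const (fun _ => h02)
    (fun t => add_nonneg h10 (mul_nonneg (by linarith) (hX0 t))) hdF hdG

lemma case5 {X Y : ℝ → ℝ} {T : ℝ} (hT : 0 < T)
    (hpX : ∀ t, X (t + T) = X t) (hpY : ∀ t, Y (t + T) = Y t)
    (hX0 : ∀ t, 0 ≤ X t) (hY0 : ∀ t, 0 ≤ Y t)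
    {g00 g01 g02 g10 g11 g12 : ℝ} (h02 : 0 ≤ g02) (h11 : 0 ≤ g11)
    (hdX : ∀ t, HasDerivAt X (g00 + g01 * X t ^ 2 + g02 * Y t ^ 2) t)
    (hdY : ∀ t, HasDerivAt Y (g10 + g11 * X t ^ 2 + g12 * Y t ^ 2) t) :
    (∀ t s, X t = X s) ∧ (∀ t s, Y t = Y s) := by
  have hcX : Continuous X := by
    rw [continuous_iff_continuousAt]; exact fun t => (hdX t).continuousAt
  have hcY : Continuous Y := by
    rw [continuous_iff_continuousAt]; exact fun t => (hdY t).continuousAt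
  have hdF : ∀ t, HasDerivAt (fun t => g00 + g01 * X t ^ 2 + g02 * Y t ^ 2)
      ((fun t : ℝ => 2 * g01 * X t) t * (g00 + g01 * X t ^ 2 + g02 * Y t ^ 2)
        + (fun t : ℝ => 2 * g02 * Y t) t * (g10 + g11 * X t ^ 2 + g12 * Y t ^ 2)) t := by
    intro t
    have h1 := ((hasDerivAt_const t g00).add (((hdX t).pow 2).const_mul g01)).add
      (((hdY t).pow 2).const_mul g02)
    exact h1.congr_deriv (by ring)
  have hdG : ∀ t, HasDerivAt (fun t => g10 + g11 * X t ^ 2 + g12 * Y t ^ 2)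
      ((fun t : ℝ => 2 * g11 * X t) t * (g00 + g01 * X t ^ 2 + g02 * Y t ^ 2)
        + (fun t : ℝ => 2 * g12 * Y t) t * (g10 + g11 * X t ^ 2 + g12 * Y t ^ 2)) t := by
    intro t
    have h1 := ((hasDerivAt_const t g10).add (((hdX t).pow 2).const_mul g11)).add
      (((hdY t).pow 2).const_mul g12)
    exact h1.congr_deriv (by ring)
  exact planar_coop_const hT hpX hpY hdX hdY (by fun_prop) (by fun_prop)
    (by fun_prop) (by fun_prop)
    (fun t => mul_nonneg (by linarith) (hY0 t))
    (fun t => mul_nonneg (by linarith) (hX0 t)) hdF hdG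

lemma case6 {X Y : ℝ → ℝ} {T : ℝ} (hT : 0 < T)
    (hpX : ∀ t, X (t + T) = X t) (hpY : ∀ t, Y (t + T) = Y t)
    (hX0 : ∀ t, 0 ≤ X t) (hY0 : ∀ t, 0 ≤ Y t)
    {g00 g01 g02 g10 g11 g12 : ℝ} (h02 : 0 ≤ g02) (h10 : 0 ≤ g10) (h11 : 0 ≤ g11)
    (hdX : ∀ t, HasDerivAt X (g00 * X t + g01 * X t ^ 2 + g02 * Y t ^ 2) t)
    (hdY : ∀ t, HasDerivAt Y (g10 * X t + g11 * X t ^ 2 + g12 * Y t ^ 2) t) :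
    (∀ t s, X t = X s) ∧ (∀ t s, Y t = Y s) := by
  have hcX : Continuous X := by
    rw [continuous_iff_continuousAt]; exact fun t => (hdX t).continuousAt
  have hcY : Continuous Y := by
    rw [continuous_iff_continuousAt]; exact fun t => (hdY t).continuousAt
  have hdF : ∀ t, HasDerivAt (fun t => g00 * X t + g01 * X t ^ 2 + g02 * Y t ^ 2)
      ((fun t : ℝ => g00 + 2 * g01 * X t) t * (g00 * X t + g01 * X t ^ 2 + g02 * Y t ^ 2)
        + (fun t : ℝ => 2 * g02 * Y t) t * (g10 * X t + g11 * X t ^ 2 + g12 * Y t ^ 2)) t := by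
    intro t
    have h1 := (((hdX t).const_mul g00).add (((hdX t).pow 2).const_mul g01)).add
      (((hdY t).pow 2).const_mul g02)
    exact h1.congr_deriv (by ring)
  have hdG : ∀ t, HasDerivAt (fun t => g10 * X t + g11 * X t ^ 2 + g12 * Y t ^ 2)
      ((fun t : ℝ => g10 + 2 * g11 * X t) t * (g00 * X t + g01 * X t ^ 2 + g02 * Y t ^ 2)
        + (fun t : ℝ => 2 * g12 * Y t) t * (g10 * X t + g11 * X t ^ 2 + g12 * Y t ^ 2)) t := by
    intro t
    have h1 := (((hdX t).const_mul g10).add (((hdX t).pow 2).const_mul g11)).add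
      (((hdY t).pow 2).const_mul g12)
    exact h1.congr_deriv (by ring)
  exact planar_coop_const hT hpX hpY hdX hdY (by fun_prop) (by fun_prop)
    (by fun_prop) (by fun_prop)
    (fun t => mul_nonneg (by linarith) (hY0 t))
    (fun t => add_nonneg h10 (mul_nonneg (by linarith) (hX0 t))) hdF hdG


lemma massAction_expand (A Γ : Matrix (Fin 2) (Fin 3) ℤ) (κ : Fin 3 → ℝ)
    (σ : Equiv.Perm (Fin 2)) (τ : Equiv.Perm (Fin 3)) (v : Fin 2 → ℝ) (i : Fin 2) :
    massAction A Γ κ v (σ i) =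
      ∑ j : Fin 3, ((Γ (σ i) (τ j) : ℝ) * κ (τ j)) *
        (v (σ 0) ^ (A (σ 0) (τ j)).toNat * v (σ 1) ^ (A (σ 1) (τ j)).toNat) := by
  unfold massAction
  rw [← Equiv.sum_comp τ (fun j => (Γ (σ i) j : ℝ) * κ j * ∏ k, v k ^ (A k j).toNat)]
  refine Finset.sum_congr rfl fun j _ => ?_
  rw [← Equiv.prod_comp σ (fun k => v k ^ (A k (τ j)).toNat), Fin.prod_univ_two]


end NPO

end Helpers

/-- A two-species, three-reaction, quadratic mass-action system whose source
complexes form (up to exchanging the two species) one of the six configurations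
`{0, X, Y}`, `{0, X, X+Y}`, `{0, 2X, Y}`, `{X, 2X, Y}`, `{0, 2X, 2Y}`,
`{X, 2X, 2Y}` admits no periodic orbit, with arbitrary target complexes. -/
theorem stmt18 (A Γ : Matrix (Fin 2) (Fin 3) ℤ)
    (hA : ∀ i j, 0 ≤ A i j)
    (hAΓ : ∀ i j, 0 ≤ A i j + Γ i j)
    (hquad : ∀ j, (∑ i, A i j) ≤ 2)
    (hsrc : ∃ (σ : Equiv.Perm (Fin 2)) (τ : Equiv.Perm (Fin 3)),
      (∀ i j, A (σ i) (τ j) = (!![0, 1, 0; 0, 0, 1] : Matrix (Fin 2) (Fin 3) ℤ) i j) ∨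
      (∀ i j, A (σ i) (τ j) = (!![0, 1, 1; 0, 0, 1] : Matrix (Fin 2) (Fin 3) ℤ) i j) ∨
      (∀ i j, A (σ i) (τ j) = (!![0, 2, 0; 0, 0, 1] : Matrix (Fin 2) (Fin 3) ℤ) i j) ∨
      (∀ i j, A (σ i) (τ j) = (!![1, 2, 0; 0, 0, 1] : Matrix (Fin 2) (Fin 3) ℤ) i j) ∨
      (∀ i j, A (σ i) (τ j) = (!![0, 2, 0; 0, 0, 2] : Matrix (Fin 2) (Fin 3) ℤ) i j) ∨
      (∀ i j, A (σ i) (τ j) = (!![1, 2, 0; 0, 0, 2] : Matrix (Fin 2) (Fin 3) ℤ) i j))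
    (κ : Fin 3 → ℝ) (hκ : ∀ j, 0 < κ j) :
    ¬ ∃ O : Set (Fin 2 → ℝ), IsPeriodicOrbit (massAction A Γ κ) O := by
  rintro ⟨O, x, T, hT, hnn, hode, hper, ⟨t₀, s₀, hne⟩, -⟩
  obtain ⟨σ, τ, hsrc6⟩ := hsrc
  set X : ℝ → ℝ := fun t => x t (σ 0) with hXdef
  set Y : ℝ → ℝ := fun t => x t (σ 1) with hYdef
  have hdX : ∀ t, HasDerivAt X (massAction A Γ κ (x t) (σ 0)) t :=
    fun t => (hasDerivAt_pi.1 (hode t)) (σ 0)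
  have hdY : ∀ t, HasDerivAt Y (massAction A Γ κ (x t) (σ 1)) t :=
    fun t => (hasDerivAt_pi.1 (hode t)) (σ 1)
  have hpX : ∀ t, X (t + T) = X t := fun t => by simp only [hXdef, hper t]
  have hpY : ∀ t, Y (t + T) = Y t := fun t => by simp only [hYdef, hper t]
  have hX0 : ∀ t, 0 ≤ X t := fun t => hnn t (σ 0)
  have hY0 : ∀ t, 0 ≤ Y t := fun t => hnn t (σ 1)
  -- nonnegativity of Γ-coefficients at source-exponent-zero positions
  have hGnn : ∀ i j, A (σ i) (τ j) = 0 → 0 ≤ ((Γ (σ i) (τ j) : ℝ) * κ (τ j)) := by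
    intro i j h
    have h1 := hAΓ (σ i) (τ j)
    rw [h, zero_add] at h1
    exact mul_nonneg (by exact_mod_cast h1) (hκ (τ j)).le
  -- final contradiction from constancy
  have final : (∀ t s, X t = X s) ∧ (∀ t s, Y t = Y s) → False := by
    rintro ⟨h1, h2⟩
    apply hne
    funext i
    have h2' : ∀ k : Fin 2, k = 0 ∨ k = 1 := by decide
    have hi : σ (σ.symm i) = i := σ.apply_symm_apply i
    rcases h2' (σ.symm i) with h | h
    · rw [← hi, h]; exact h1 t₀ s₀
    · rw [← hi, h]; exact h2 t₀ s₀
  rcases hsrc6 with hB | hB | hB | hB | hB | hB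
  · -- {0, X, Y}
    have e00 : A (σ 0) (τ 0) = 0 := by simpa using hB 0 0
    have e01 : A (σ 0) (τ 1) = 1 := by simpa using hB 0 1
    have e02 : A (σ 0) (τ 2) = 0 := by simpa using hB 0 2
    have e10 : A (σ 1) (τ 0) = 0 := by simpa using hB 1 0
    have e11 : A (σ 1) (τ 1) = 0 := by simpa using hB 1 1
    have e12 : A (σ 1) (τ 2) = 1 := by simpa using hB 1 2
    have hdX' : ∀ t, HasDerivAt X (((Γ (σ 0) (τ 0) : ℝ) * κ (τ 0))
        + ((Γ (σ 0) (τ 1) : ℝ) * κ (τ 1)) * X t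
        + ((Γ (σ 0) (τ 2) : ℝ) * κ (τ 2)) * Y t) t := by
      intro t
      have h1 := hdX t
      rw [NPO.massAction_expand A Γ κ σ τ (x t) 0, Fin.sum_univ_three,
        e00, e01, e02, e10, e11, e12] at h1
      norm_num at h1
      convert h1 using 1
    have hdY' : ∀ t, HasDerivAt Y (((Γ (σ 1) (τ 0) : ℝ) * κ (τ 0))
        + ((Γ (σ 1) (τ 1) : ℝ) * κ (τ 1)) * X t
        + ((Γ (σ 1) (τ 2) : ℝ) * κ (τ 2)) * Y t) t := by
      intro t
      have h1 := hdY t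
      rw [NPO.massAction_expand A Γ κ σ τ (x t) 1, Fin.sum_univ_three,
        e00, e01, e02, e10, e11, e12] at h1
      norm_num at h1
      convert h1 using 1
    exact final (NPO.case1 hT hpX hpY (hGnn 0 2 e02) (hGnn 1 1 e11) hdX' hdY')
  · -- case {0,X,X+Y}
    have e00 : A (σ 0) (τ 0) = 0 := by simpa using hB 0 0
    have e01 : A (σ 0) (τ 1) = 1 := by simpa using hB 0 1
    have e02 : A (σ 0) (τ 2) = 1 := by simpa using hB 0 2
    have e10 : A (σ 1) (τ 0) = 0 := by simpa using hB 1 0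
    have e11 : A (σ 1) (τ 1) = 0 := by simpa using hB 1 1
    have e12 : A (σ 1) (τ 2) = 1 := by simpa using hB 1 2
    have hdX' : ∀ t, HasDerivAt X (((Γ (σ 0) (τ 0) : ℝ) * κ (τ 0)) + ((Γ (σ 0) (τ 1) : ℝ) * κ (τ 1)) * X t + ((Γ (σ 0) (τ 2) : ℝ) * κ (τ 2)) * (X t * Y t)) t := by
      intro t
      have h1 := hdX t
      rw [NPO.massAction_expand A Γ κ σ τ (x t) 0, Fin.sum_univ_three,
        e00, e01, e02, e10, e11, e12] at h1
      norm_num at h1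
      convert h1 using 2 <;> ring
    have hdY' : ∀ t, HasDerivAt Y (((Γ (σ 1) (τ 0) : ℝ) * κ (τ 0)) + ((Γ (σ 1) (τ 1) : ℝ) * κ (τ 1)) * X t + ((Γ (σ 1) (τ 2) : ℝ) * κ (τ 2)) * (X t * Y t)) t := by
      intro t
      have h1 := hdY t
      rw [NPO.massAction_expand A Γ κ σ τ (x t) 1, Fin.sum_univ_three,
        e00, e01, e02, e10, e11, e12] at h1
      norm_num at h1
      convert h1 using 2 <;> ring
    exact final (NPO.case2 hT hpX hpY hX0 hY0 (hGnn 0 0 e00) (hGnn 1 0 e10) (hGnn 1 1 e11) hdX' hdY')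
  · -- {0,2X,Y}
    have e00 : A (σ 0) (τ 0) = 0 := by simpa using hB 0 0
    have e01 : A (σ 0) (τ 1) = 2 := by simpa using hB 0 1
    have e02 : A (σ 0) (τ 2) = 0 := by simpa using hB 0 2
    have e10 : A (σ 1) (τ 0) = 0 := by simpa using hB 1 0
    have e11 : A (σ 1) (τ 1) = 0 := by simpa using hB 1 1
    have e12 : A (σ 1) (τ 2) = 1 := by simpa using hB 1 2
    have hdX' : ∀ t, HasDerivAt X (((Γ (σ 0) (τ 0) : ℝ) * κ (τ 0)) + ((Γ (σ 0) (τ 1) : ℝ) * κ (τ 1)) * X t ^ 2 + ((Γ (σ 0) (τ 2) : ℝ) * κ (τ 2)) * Y t) t := by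
      intro t
      have h1 := hdX t
      rw [NPO.massAction_expand A Γ κ σ τ (x t) 0, Fin.sum_univ_three,
        e00, e01, e02, e10, e11, e12] at h1
      norm_num [show Int.toNat 2 = 2 from rfl] at h1
      convert h1 using 2 <;> ring
    have hdY' : ∀ t, HasDerivAt Y (((Γ (σ 1) (τ 0) : ℝ) * κ (τ 0)) + ((Γ (σ 1) (τ 1) : ℝ) * κ (τ 1)) * X t ^ 2 + ((Γ (σ 1) (τ 2) : ℝ) * κ (τ 2)) * Y t) t := by
      intro t
      have h1 := hdY t
      rw [NPO.massAction_expand A Γ κ σ τ (x t) 1, Fin.sum_univ_three,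
        e00, e01, e02, e10, e11, e12] at h1
      norm_num [show Int.toNat 2 = 2 from rfl] at h1
      convert h1 using 2 <;> ring
    exact final (NPO.case3 hT hpX hpY hX0 (hGnn 0 2 e02) (hGnn 1 1 e11) hdX' hdY')
  · -- {X,2X,Y}
    have e00 : A (σ 0) (τ 0) = 1 := by simpa using hB 0 0
    have e01 : A (σ 0) (τ 1) = 2 := by simpa using hB 0 1
    have e02 : A (σ 0) (τ 2) = 0 := by simpa using hB 0 2
    have e10 : A (σ 1) (τ 0) = 0 := by simpa using hB 1 0
    have e11 : A (σ 1) (τ 1) = 0 := by simpa using hB 1 1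
    have e12 : A (σ 1) (τ 2) = 1 := by simpa using hB 1 2
    have hdX' : ∀ t, HasDerivAt X (((Γ (σ 0) (τ 0) : ℝ) * κ (τ 0)) * X t + ((Γ (σ 0) (τ 1) : ℝ) * κ (τ 1)) * X t ^ 2 + ((Γ (σ 0) (τ 2) : ℝ) * κ (τ 2)) * Y t) t := by
      intro t
      have h1 := hdX t
      rw [NPO.massAction_expand A Γ κ σ τ (x t) 0, Fin.sum_univ_three,
        e00, e01, e02, e10, e11, e12] at h1
      norm_num [show Int.toNat 2 = 2 from rfl] at h1
      convert h1 using 2 <;> ring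
    have hdY' : ∀ t, HasDerivAt Y (((Γ (σ 1) (τ 0) : ℝ) * κ (τ 0)) * X t + ((Γ (σ 1) (τ 1) : ℝ) * κ (τ 1)) * X t ^ 2 + ((Γ (σ 1) (τ 2) : ℝ) * κ (τ 2)) * Y t) t := by
      intro t
      have h1 := hdY t
      rw [NPO.massAction_expand A Γ κ σ τ (x t) 1, Fin.sum_univ_three,
        e00, e01, e02, e10, e11, e12] at h1
      norm_num [show Int.toNat 2 = 2 from rfl] at h1
      convert h1 using 2 <;> ring
    exact final (NPO.case4 hT hpX hpY hX0 (hGnn 0 2 e02) (hGnn 1 0 e10) (hGnn 1 1 e11) hdX' hdY')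
  · -- {0,2X,2Y}
    have e00 : A (σ 0) (τ 0) = 0 := by simpa using hB 0 0
    have e01 : A (σ 0) (τ 1) = 2 := by simpa using hB 0 1
    have e02 : A (σ 0) (τ 2) = 0 := by simpa using hB 0 2
    have e10 : A (σ 1) (τ 0) = 0 := by simpa using hB 1 0
    have e11 : A (σ 1) (τ 1) = 0 := by simpa using hB 1 1
    have e12 : A (σ 1) (τ 2) = 2 := by simpa using hB 1 2
    have hdX' : ∀ t, HasDerivAt X (((Γ (σ 0) (τ 0) : ℝ) * κ (τ 0)) + ((Γ (σ 0) (τ 1) : ℝ) * κ (τ 1)) * X t ^ 2 + ((Γ (σ 0) (τ 2) : ℝ) * κ (τ 2)) * Y t ^ 2) t := by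
      intro t
      have h1 := hdX t
      rw [NPO.massAction_expand A Γ κ σ τ (x t) 0, Fin.sum_univ_three,
        e00, e01, e02, e10, e11, e12] at h1
      norm_num [show Int.toNat 2 = 2 from rfl] at h1
      convert h1 using 2 <;> ring
    have hdY' : ∀ t, HasDerivAt Y (((Γ (σ 1) (τ 0) : ℝ) * κ (τ 0)) + ((Γ (σ 1) (τ 1) : ℝ) * κ (τ 1)) * X t ^ 2 + ((Γ (σ 1) (τ 2) : ℝ) * κ (τ 2)) * Y t ^ 2) t := by
      intro t
      have h1 := hdY t
      rw [NPO.massAction_expand A Γ κ σ τ (x t) 1, Fin.sum_univ_three,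
        e00, e01, e02, e10, e11, e12] at h1
      norm_num [show Int.toNat 2 = 2 from rfl] at h1
      convert h1 using 2 <;> ring
    exact final (NPO.case5 hT hpX hpY hX0 hY0 (hGnn 0 2 e02) (hGnn 1 1 e11) hdX' hdY')
  · -- {X,2X,2Y}
    have e00 : A (σ 0) (τ 0) = 1 := by simpa using hB 0 0
    have e01 : A (σ 0) (τ 1) = 2 := by simpa using hB 0 1
    have e02 : A (σ 0) (τ 2) = 0 := by simpa using hB 0 2
    have e10 : A (σ 1) (τ 0) = 0 := by simpa using hB 1 0
    have e11 : A (σ 1) (τ 1) = 0 := by simpa using hB 1 1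
    have e12 : A (σ 1) (τ 2) = 2 := by simpa using hB 1 2
    have hdX' : ∀ t, HasDerivAt X (((Γ (σ 0) (τ 0) : ℝ) * κ (τ 0)) * X t + ((Γ (σ 0) (τ 1) : ℝ) * κ (τ 1)) * X t ^ 2 + ((Γ (σ 0) (τ 2) : ℝ) * κ (τ 2)) * Y t ^ 2) t := by
      intro t
      have h1 := hdX t
      rw [NPO.massAction_expand A Γ κ σ τ (x t) 0, Fin.sum_univ_three,
        e00, e01, e02, e10, e11, e12] at h1
      norm_num [show Int.toNat 2 = 2 from rfl] at h1
      convert h1 using 2 <;> ring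
    have hdY' : ∀ t, HasDerivAt Y (((Γ (σ 1) (τ 0) : ℝ) * κ (τ 0)) * X t + ((Γ (σ 1) (τ 1) : ℝ) * κ (τ 1)) * X t ^ 2 + ((Γ (σ 1) (τ 2) : ℝ) * κ (τ 2)) * Y t ^ 2) t := by
      intro t
      have h1 := hdY t
      rw [NPO.massAction_expand A Γ κ σ τ (x t) 1, Fin.sum_univ_three,
        e00, e01, e02, e10, e11, e12] at h1
      norm_num [show Int.toNat 2 = 2 from rfl] at h1
      convert h1 using 2 <;> ring
    exact final (NPO.case6 hT hpX hpY hX0 hY0 (hGnn 0 2 e02) (hGnn 1 0 e10) (hGnn 1 1 e11) hdX' hdY')
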